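/- Quantum advantage ratio for absorption detection: with κ_B = 1, κ_I = 1, N_B = 0, N_S > 0, 0 ≤ κ_T < 1, the ratio of the EA error probability P_E = (1/2)(1+N_S(1-√κ_T))^{-2M} to the classical exponential benchmark P_C = (1/4)e^{-MN_S(1-√κ_T)²} tends to 0 as M → ∞. -/

import Mathlib

open Filter in
/-- Quantum advantage in absorption detection: for `κ_B = κ_I = 1`, `N_B = 0`, the ratio of
the EA error probability `(1/2)(1+N_S(1-√κ_T))^{-2M}` to the classical exponential benchmark
`(1/4) e^{-M N_S (1-√κ_T)²}` tends to `0` as `M → ∞` (assuming `N_S(1-√κ_T) ≤ 1`). -/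
theorem stmt_19 (N_S κ_T : ℝ) (hNS : 0 < N_S) (hκ0 : 0 ≤ κ_T) (hκ1 : κ_T < 1)
    (hx : N_S * (1 - Real.sqrt κ_T) ≤ 1) :
    Tendsto (fun M : ℕ =>
        ((1/2) * (1 / (1 + N_S * (1 - Real.sqrt κ_T))) ^ (2 * M)) /
          ((1/4) * Real.exp (-(M * N_S * (1 - Real.sqrt κ_T) ^ 2))))
      atTop (nhds 0) := by
  set s := Real.sqrt κ_T with hs
  have hs0 : 0 ≤ s := Real.sqrt_nonneg _
  have hs1 : s < 1 := by
    rw [hs, show (1:ℝ) = Real.sqrt 1 by simp]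
    exact Real.sqrt_lt_sqrt hκ0 hκ1
  set x := N_S * (1 - s) with hxdef
  have hx0 : 0 < x := mul_pos hNS (by linarith)
  have h1x : (0:ℝ) < 1 + x := by linarith
  set c := N_S * (1 - s) ^ 2 with hc
  have hcx : c = x * (1 - s) := by rw [hc, hxdef]; ring
  have hcle : c ≤ x := by
    rw [hcx]
    nlinarith
  -- key: exp (x/2) < 1 + x
  have hkey : Real.exp (x / 2) < 1 + x := by
    have h1 : Real.exp (-(x/2)) > 1 - x/2 := by
      have := Real.add_one_lt_exp (x := -(x/2)) (by intro h; nlinarith [neg_eq_zero.mp h])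
      linarith
    have h2 : Real.exp (x/2) < 1 / (1 - x/2) := by
      have hpos : 0 < 1 - x/2 := by linarith
      rw [lt_div_iff₀ hpos]
      rw [Real.exp_neg] at h1
      have hp := Real.exp_pos (x/2)
      have hmc : Real.exp (x/2) * (Real.exp (x/2))⁻¹ = 1 := mul_inv_cancel₀ (ne_of_gt hp)
      nlinarith
    have h3 : 1 / (1 - x/2) ≤ 1 + x := by
      have hpos : 0 < 1 - x/2 := by linarith
      rw [div_le_iff₀ hpos]
      nlinarith
    linarith
  have hexplt : Real.exp c < (1 + x) ^ 2 := by
    have : Real.exp c ≤ Real.exp x := Real.exp_le_exp.mpr hcle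
    have hx2 : Real.exp x = (Real.exp (x/2)) ^ 2 := by
      rw [sq, ← Real.exp_add, add_halves]
    have hsq : (Real.exp (x/2)) ^ 2 < (1 + x) ^ 2 := by
      apply pow_lt_pow_left₀ hkey (le_of_lt (Real.exp_pos _))
      norm_num
    calc Real.exp c ≤ Real.exp x := this
      _ = (Real.exp (x/2)) ^ 2 := hx2
      _ < (1 + x) ^ 2 := hsq
  set r := Real.exp c / (1 + x) ^ 2 with hr
  have hr0 : 0 ≤ r := by positivity
  have hr1 : r < 1 := by
    rw [hr, div_lt_one (by positivity)]
    exact hexplt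
  have htend : Tendsto (fun M : ℕ => 2 * r ^ M) atTop (nhds 0) := by
    have := tendsto_pow_atTop_nhds_zero_of_lt_one hr0 hr1
    have h2 := this.const_mul (2:ℝ)
    simpa using h2
  refine htend.congr fun M => ?_
  have hne : (1 + x) ≠ 0 := ne_of_gt h1x
  have heq : (M : ℝ) * N_S * (1 - s) ^ 2 = (M : ℝ) * c := by rw [hc]; ring
  rw [heq, Real.exp_neg, Real.exp_nat_mul, hr, div_pow, pow_mul]
  have hE : (0:ℝ) < Real.exp c ^ M := pow_pos (Real.exp_pos c) M
  field_simp
  ring_nf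
  rw [← mul_pow, inv_mul_cancel₀ (ne_of_gt (by nlinarith)), one_pow, one_mul]
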